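/- Fix k ≥ 1. Consider the two-link network with feasible set X = {(x₁, y₁, x₂, y₂) ∈ ℝ⁴ : all entries ≥ 0, x₁ + x₂ = 1, y₁ + y₂ = 1}, per-unit link costs c₁(z) = k x₁ + y₁ and c₂(z) = x₂ + k y₂ (experienced equally by both vehicle types on each link), and social cost C(z) = (k x₁ + y₁)(x₁ + y₁) + (x₂ + k y₂)(x₂ + y₂). Then: (i) the flow z^EQ = (1, 0, 0, 1) satisfies the variational inequality ⟨c(z^EQ), z^EQ − z⟩ ≤ 0 for all z ∈ X, where c(z) = (c₁, c₁, c₂, c₂); (ii) C(z^EQ) = 2k; (iii) the minimum of C over X equals 2, attained at (0, 1, 1, 0). Consequently the ratio of equilibrium to optimal social cost of this instance equals k. -/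

import Mathlib

open Matrix

/-- Example 2 (two-sided asymmetry): with unit demands of each type and link
costs `c₁ = k x₁ + y₁`, `c₂ = x₂ + k y₂`, the flow `(1, 0, 0, 1)` is a Wardrop
equilibrium of cost `2k`, the minimum social cost is `2` (attained at
`(0, 1, 1, 0)`), so the equilibrium-to-optimal ratio equals `k`. -/
theorem example_two_sided (k : ℝ) (hk : 1 ≤ k)
    (X : Set (Fin 4 → ℝ))
    (hX : X = {z | (∀ i, 0 ≤ z i) ∧ z 0 + z 2 = 1 ∧ z 1 + z 3 = 1})
    (c : (Fin 4 → ℝ) → (Fin 4 → ℝ))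
    (hc : ∀ z, c z = ![k * z 0 + z 1, k * z 0 + z 1, z 2 + k * z 3, z 2 + k * z 3])
    (C : (Fin 4 → ℝ) → ℝ)
    (hC : ∀ z, C z = (k * z 0 + z 1) * (z 0 + z 1) + (z 2 + k * z 3) * (z 2 + z 3))
    (zeq : Fin 4 → ℝ) (hzeq : zeq = ![1, 0, 0, 1]) :
    (∀ z ∈ X, (c zeq) ⬝ᵥ (zeq - z) ≤ 0) ∧
    C zeq = 2 * k ∧
    IsLeast {v : ℝ | ∃ z ∈ X, v = C z} 2 ∧
    (![0, 1, 1, 0] : Fin 4 → ℝ) ∈ X ∧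
    C ![0, 1, 1, 0] = 2 ∧
    C zeq / C ![0, 1, 1, 0] = k := by
  subst hX hzeq
  have hmem : (![0, 1, 1, 0] : Fin 4 → ℝ) ∈
      {z : Fin 4 → ℝ | (∀ i, 0 ≤ z i) ∧ z 0 + z 2 = 1 ∧ z 1 + z 3 = 1} := by
    refine ⟨fun i => ?_, by simp [Matrix.cons_val], by simp [Matrix.cons_val]⟩
    fin_cases i <;> norm_num
  have hCopt : C ![0, 1, 1, 0] = 2 := by rw [hC]; simp [Matrix.cons_val]; norm_num
  have hCeq : C ![1, 0, 0, 1] = 2 * k := by rw [hC]; simp [Matrix.cons_val]; ring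
  refine ⟨?_, hCeq, ⟨⟨![0,1,1,0], hmem, hCopt.symm⟩, ?_⟩, hmem, hCopt, ?_⟩
  · rintro z ⟨hpos, h1, h2⟩
    rw [hc]
    simp [dotProduct, Fin.sum_univ_four]
    nlinarith [hpos 0, hpos 1, hpos 2, hpos 3, mul_le_mul_of_nonneg_left hk (hpos 0),
      mul_le_mul_of_nonneg_left hk (hpos 3)]
  · rintro v ⟨z, ⟨hpos, h1, h2⟩, rfl⟩
    rw [hC]
    nlinarith [hpos 0, hpos 1, hpos 2, hpos 3, sq_nonneg (z 0 + z 1 - 1),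
      sq_nonneg (z 2 + z 3 - 1), mul_nonneg (sub_nonneg.mpr hk) (hpos 0),
      mul_nonneg (sub_nonneg.mpr hk) (hpos 3),
      mul_nonneg (mul_nonneg (sub_nonneg.mpr hk) (hpos 0)) (add_nonneg (hpos 0) (hpos 1)),
      mul_nonneg (mul_nonneg (sub_nonneg.mpr hk) (hpos 3)) (add_nonneg (hpos 2) (hpos 3))]
  · rw [hCeq, hCopt]; ring
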